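/- Let N ≥ 2, α ∈ (0,N), and let Ω, F ⊆ ℝ^N be bounded Lebesgue-measurable sets. Then V_α(F) − V_α(Ω) = ∫_{F\Ω} (v_F(x) + v_Ω(x)) dx − ∫_{Ω\F} (v_F(x) + v_Ω(x)) dx, and in particular V_α(F) − V_α(Ω) ≤ ∫_{Ω Δ F} (v_F(x) + v_Ω(x)) dx. -/
import Mathlib

open MeasureTheory Metric Bornology Set

namespace RieszProofAux

variable {N : ℕ}

lemma lint_ball_lt_top (hN : 0 < N) {e : ℝ} (he0 : e < 0) (heN : -(N : ℝ) < e) (R : ℝ) :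
    ∫⁻ z in ball (0 : EuclideanSpace ℝ (Fin N)) R, ENNReal.ofReal (‖z‖ ^ e) < ⊤ := by
  haveI : Nonempty (Fin N) := Fin.pos_iff_nonempty.mp hN
  set μ := volume.restrict (ball (0 : EuclideanSpace ℝ (Fin N)) R) with hμ
  have hmeas : AEMeasurable (fun z : EuclideanSpace ℝ (Fin N) => ‖z‖ ^ e) μ := by fun_prop
  rw [lintegral_eq_lintegral_meas_lt μ
    (Filter.Eventually.of_forall fun z => Real.rpow_nonneg (norm_nonneg _) e) hmeas]
  set p : ℝ := e⁻¹ * N with hp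
  have hp1 : p < -1 := by
    rw [hp, inv_mul_eq_div]
    rw [div_lt_iff_of_neg he0]
    linarith
  set B : ENNReal := volume (ball (0 : EuclideanSpace ℝ (Fin N)) 1) with hB
  have key1 : ∀ t : ℝ, μ {z | t < ‖z‖ ^ e} ≤ volume (ball (0 : EuclideanSpace ℝ (Fin N)) R) := by
    intro t
    calc μ {z | t < ‖z‖ ^ e} ≤ μ univ := measure_mono (subset_univ _)
    _ = volume (ball (0 : EuclideanSpace ℝ (Fin N)) R) := by
        rw [hμ, Measure.restrict_apply_univ]
  have key2 : ∀ t : ℝ, 0 < t →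
      μ {z | t < ‖z‖ ^ e} ≤ ENNReal.ofReal (t ^ p) * B := by
    intro t ht
    have hsub : {z : EuclideanSpace ℝ (Fin N) | t < ‖z‖ ^ e} ⊆ ball 0 (t ^ e⁻¹) := by
      intro z hz
      simp only [mem_setOf_eq] at hz
      have hz0 : z ≠ 0 := by
        rintro rfl
        rw [norm_zero, Real.zero_rpow he0.ne] at hz
        exact absurd hz (not_lt.mpr ht.le)
      have hzpos : 0 < ‖z‖ := norm_pos_iff.mpr hz0
      rw [mem_ball_zero_iff]
      exact (Real.lt_rpow_inv_iff_of_neg hzpos ht he0).mpr hz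
    calc μ {z | t < ‖z‖ ^ e} ≤ volume {z : EuclideanSpace ℝ (Fin N) | t < ‖z‖ ^ e} :=
          Measure.restrict_le_self _
    _ ≤ volume (ball (0 : EuclideanSpace ℝ (Fin N)) (t ^ e⁻¹)) := measure_mono hsub
    _ = ENNReal.ofReal ((t ^ e⁻¹) ^ (Module.finrank ℝ (EuclideanSpace ℝ (Fin N)))) * B :=
          Measure.addHaar_ball _ _ (Real.rpow_nonneg ht.le _)
    _ = ENNReal.ofReal (t ^ p) * B := by
          rw [finrank_euclideanSpace, Fintype.card_fin, ← Real.rpow_natCast (t ^ e⁻¹) N,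
            ← Real.rpow_mul ht.le]
  have hsplit : Ioi (0 : ℝ) = Ioc (0 : ℝ) 1 ∪ Ioi 1 := (Ioc_union_Ioi_eq_Ioi zero_le_one).symm
  rw [hsplit, lintegral_union measurableSet_Ioi (Ioc_disjoint_Ioi le_rfl)]
  have h1 : ∫⁻ t in Ioc (0 : ℝ) 1, μ {z | t < ‖z‖ ^ e} <  ⊤ := by
    calc ∫⁻ t in Ioc (0 : ℝ) 1, μ {z | t < ‖z‖ ^ e}
        ≤ ∫⁻ _ in Ioc (0 : ℝ) 1, volume (ball (0 : EuclideanSpace ℝ (Fin N)) R) :=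
          lintegral_mono fun t => key1 t
    _ = volume (ball (0 : EuclideanSpace ℝ (Fin N)) R) * volume (Ioc (0 : ℝ) 1) :=
          setLIntegral_const _ _
    _ < ⊤ := ENNReal.mul_lt_top measure_ball_lt_top (by simp)
  have h2 : ∫⁻ t in Ioi (1 : ℝ), μ {z | t < ‖z‖ ^ e} < ⊤ := by
    have hle : ∫⁻ t in Ioi (1 : ℝ), μ {z | t < ‖z‖ ^ e}
        ≤ ∫⁻ t in Ioi (1 : ℝ), ENNReal.ofReal (t ^ p) * B := by
      refine setLIntegral_mono (by fun_prop) fun t ht => key2 t (lt_trans zero_lt_one ht)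
    refine lt_of_le_of_lt hle ?_
    rw [lintegral_mul_const _ (by fun_prop)]
    exact ENNReal.mul_lt_top
      (integrableOn_Ioi_rpow_of_lt hp1 zero_lt_one).lintegral_lt_top measure_ball_lt_top
  exact ENNReal.add_lt_top.mpr ⟨h1, h2⟩



lemma lint_shift (x : EuclideanSpace ℝ (Fin N)) (g : EuclideanSpace ℝ (Fin N) → ENNReal)
    (hg : Measurable g) (R : ℝ) :
    ∫⁻ y in ball x R, g (x - y) = ∫⁻ z in ball (0 : EuclideanSpace ℝ (Fin N)) R, g z := by
  have h := Measure.measurePreserving_sub_left (volume : Measure (EuclideanSpace ℝ (Fin N))) x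
  have hpre : (fun y : EuclideanSpace ℝ (Fin N) => x - y) ⁻¹' ball 0 R = ball x R := by
    ext y
    simp [mem_ball, dist_eq_norm, norm_sub_rev]
  conv_rhs => rw [← h.map_eq]
  rw [setLIntegral_map measurableSet_ball hg h.measurable, hpre]

variable {e : ℝ}

lemma lint_pt_lt_top (hN : 0 < N) (he0 : e < 0) (heN : -(N : ℝ) < e)
    (x : EuclideanSpace ℝ (Fin N)) {B : Set (EuclideanSpace ℝ (Fin N))} (hB : IsBounded B) :
    ∫⁻ y in B, ENNReal.ofReal (‖x - y‖ ^ e) < ⊤ := by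
  obtain ⟨r, hr⟩ := hB.subset_ball x
  calc ∫⁻ y in B, ENNReal.ofReal (‖x - y‖ ^ e)
      ≤ ∫⁻ y in ball x r, ENNReal.ofReal (‖x - y‖ ^ e) := lintegral_mono_set hr
  _ = ∫⁻ z in ball (0 : EuclideanSpace ℝ (Fin N)) r, ENNReal.ofReal (‖z‖ ^ e) :=
      lint_shift x (fun z => ENNReal.ofReal (‖z‖ ^ e)) (by fun_prop) r
  _ < ⊤ := lint_ball_lt_top hN he0 heN r

lemma integrableOn_pot (hN : 0 < N) (he0 : e < 0) (heN : -(N : ℝ) < e)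
    (x : EuclideanSpace ℝ (Fin N)) {B : Set (EuclideanSpace ℝ (Fin N))} (hB : IsBounded B) :
    IntegrableOn (fun y => ‖x - y‖ ^ e) B := by
  refine ⟨(by fun_prop : Measurable fun y : EuclideanSpace ℝ (Fin N) =>
    ‖x - y‖ ^ e).aestronglyMeasurable, ?_⟩
  rw [hasFiniteIntegral_iff_ofReal
    (Filter.Eventually.of_forall fun y => Real.rpow_nonneg (norm_nonneg _) e)]
  exact lint_pt_lt_top hN he0 heN x hB

lemma integrable_prod (hN : 0 < N) (he0 : e < 0) (heN : -(N : ℝ) < e)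
    {A B : Set (EuclideanSpace ℝ (Fin N))} (hAb : IsBounded A) (hBb : IsBounded B) :
    Integrable (fun p : EuclideanSpace ℝ (Fin N) × EuclideanSpace ℝ (Fin N) => ‖p.1 - p.2‖ ^ e)
      ((volume.restrict A).prod (volume.restrict B)) := by
  obtain ⟨r, hr⟩ := (hAb.union hBb).subset_ball 0
  have hA : A ⊆ ball (0 : EuclideanSpace ℝ (Fin N)) r := fun z hz => hr (Or.inl hz)
  have hB : B ⊆ ball (0 : EuclideanSpace ℝ (Fin N)) r := fun z hz => hr (Or.inr hz)
  refine ⟨(by fun_prop : Measurable fun p : EuclideanSpace ℝ (Fin N) × EuclideanSpace ℝ (Fin N) =>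
    ‖p.1 - p.2‖ ^ e).aestronglyMeasurable, ?_⟩
  rw [hasFiniteIntegral_iff_ofReal
    (Filter.Eventually.of_forall fun p => Real.rpow_nonneg (norm_nonneg _) e)]
  rw [lintegral_prod _ (by fun_prop : Measurable fun p :
    EuclideanSpace ℝ (Fin N) × EuclideanSpace ℝ (Fin N) =>
    ENNReal.ofReal (‖p.1 - p.2‖ ^ e)).aemeasurable]
  set C : ENNReal := ∫⁻ z in ball (0 : EuclideanSpace ℝ (Fin N)) (2 * r),
    ENNReal.ofReal (‖z‖ ^ e) with hC
  calc ∫⁻ x in A, ∫⁻ y in B, ENNReal.ofReal (‖x - y‖ ^ e)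
      ≤ ∫⁻ _ in A, C := by
        refine setLIntegral_mono measurable_const fun x hx => ?_
        have hsub : B ⊆ ball x (2 * r) := by
          intro y hy
          have h1 : ‖x‖ < r := mem_ball_zero_iff.mp (hA hx)
          have h2 : ‖y‖ < r := mem_ball_zero_iff.mp (hB hy)
          have : ‖y - x‖ ≤ ‖y‖ + ‖x‖ := norm_sub_le _ _
          rw [mem_ball_iff_norm]
          linarith
        calc ∫⁻ y in B, ENNReal.ofReal (‖x - y‖ ^ e)
            ≤ ∫⁻ y in ball x (2 * r), ENNReal.ofReal (‖x - y‖ ^ e) := lintegral_mono_set hsub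
        _ = C := lint_shift x (fun z => ENNReal.ofReal (‖z‖ ^ e)) (by fun_prop) (2 * r)
  _ = C * volume A := setLIntegral_const _ _
  _ < ⊤ := ENNReal.mul_lt_top (lint_ball_lt_top hN he0 heN _)
      ((measure_mono hA).trans_lt measure_ball_lt_top)

lemma pot_integrableOn (hN : 0 < N) (he0 : e < 0) (heN : -(N : ℝ) < e)
    {A B : Set (EuclideanSpace ℝ (Fin N))} (hAb : IsBounded A) (hBb : IsBounded B) :
    IntegrableOn (fun x => ∫ y in B, ‖x - y‖ ^ e) A :=
  (integrable_prod hN he0 heN hAb hBb).integral_prod_left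

lemma I_symm (hN : 0 < N) (he0 : e < 0) (heN : -(N : ℝ) < e)
    {A B : Set (EuclideanSpace ℝ (Fin N))} (hAb : IsBounded A) (hBb : IsBounded B) :
    ∫ x in A, ∫ y in B, ‖x - y‖ ^ e = ∫ x in B, ∫ y in A, ‖x - y‖ ^ e := by
  rw [integral_integral_swap (integrable_prod hN he0 heN hAb hBb)]
  refine integral_congr_ae (Filter.Eventually.of_forall fun y => ?_)
  refine integral_congr_ae (Filter.Eventually.of_forall fun x => ?_)
  show ‖x - y‖ ^ e = ‖y - x‖ ^ e
  rw [norm_sub_rev]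


lemma I_add_left (hN : 0 < N) (he0 : e < 0) (heN : -(N : ℝ) < e)
    {A A' B : Set (EuclideanSpace ℝ (Fin N))} (hA'm : MeasurableSet A') (hd : Disjoint A A')
    (hAb : IsBounded A) (hA'b : IsBounded A') (hBb : IsBounded B) :
    ∫ x in A ∪ A', ∫ y in B, ‖x - y‖ ^ e =
      (∫ x in A, ∫ y in B, ‖x - y‖ ^ e) + ∫ x in A', ∫ y in B, ‖x - y‖ ^ e :=
  setIntegral_union hd hA'm (pot_integrableOn hN he0 heN hAb hBb)
    (pot_integrableOn hN he0 heN hA'b hBb)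

lemma I_add_right (hN : 0 < N) (he0 : e < 0) (heN : -(N : ℝ) < e)
    {A B B' : Set (EuclideanSpace ℝ (Fin N))} (hB'm : MeasurableSet B') (hd : Disjoint B B')
    (hAb : IsBounded A) (hBb : IsBounded B) (hB'b : IsBounded B') :
    ∫ x in A, ∫ y in B ∪ B', ‖x - y‖ ^ e =
      (∫ x in A, ∫ y in B, ‖x - y‖ ^ e) + ∫ x in A, ∫ y in B', ‖x - y‖ ^ e := by
  rw [I_symm hN he0 heN hAb (hBb.union hB'b), I_add_left hN he0 heN hB'm hd hBb hB'b hAb,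
    I_symm hN he0 heN hBb hAb, I_symm hN he0 heN hB'b hAb]

lemma I_nonneg (A B : Set (EuclideanSpace ℝ (Fin N))) :
    0 ≤ ∫ x in A, ∫ y in B, ‖x - y‖ ^ e :=
  integral_nonneg fun _ => integral_nonneg fun _ => Real.rpow_nonneg (norm_nonneg _) _

end RieszProofAux

open RieszProofAux in
/-- For `N ≥ 2`, `α ∈ (0,N)` and bounded measurable sets `Ω, F ⊆ ℝ^N`,
`V_α(F) − V_α(Ω) = ∫_{F\Ω} (v_F + v_Ω) − ∫_{Ω\F} (v_F + v_Ω)`, and in particular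
`V_α(F) − V_α(Ω) ≤ ∫_{Ω Δ F} (v_F + v_Ω)`. -/
theorem riesz_energy_diff_eq_potentials (N : ℕ) (hN : 2 ≤ N) (α : ℝ)
    (hα : α ∈ Set.Ioo (0 : ℝ) N)
    (Ω F : Set (EuclideanSpace ℝ (Fin N)))
    (hΩmeas : MeasurableSet Ω) (hFmeas : MeasurableSet F)
    (hΩbd : Bornology.IsBounded Ω) (hFbd : Bornology.IsBounded F) :
    ((∫ x in F, ∫ y in F, ‖x - y‖ ^ (α - N)) - (∫ x in Ω, ∫ y in Ω, ‖x - y‖ ^ (α - N)) =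
      (∫ x in F \ Ω,
          ((∫ y in F, ‖x - y‖ ^ (α - N)) + (∫ y in Ω, ‖x - y‖ ^ (α - N)))) -
      (∫ x in Ω \ F,
          ((∫ y in F, ‖x - y‖ ^ (α - N)) + (∫ y in Ω, ‖x - y‖ ^ (α - N))))) ∧
    (∫ x in F, ∫ y in F, ‖x - y‖ ^ (α - N)) - (∫ x in Ω, ∫ y in Ω, ‖x - y‖ ^ (α - N)) ≤
      ∫ x in symmDiff Ω F,
        ((∫ y in F, ‖x - y‖ ^ (α - N)) + (∫ y in Ω, ‖x - y‖ ^ (α - N))) := by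
  have hN0 : 0 < N := lt_of_lt_of_le two_pos hN
  have he0 : α - (N : ℝ) < 0 := by linarith [hα.2]
  have heN : -(N : ℝ) < α - (N : ℝ) := by linarith [hα.1]
  set C := F ∩ Ω with hCdef
  set D := F \ Ω with hDdef
  set G := Ω \ F with hGdef
  have hCm : MeasurableSet C := hFmeas.inter hΩmeas
  have hDm : MeasurableSet D := hFmeas.diff hΩmeas
  have hGm : MeasurableSet G := hΩmeas.diff hFmeas
  have hCb : IsBounded C := hFbd.subset inter_subset_left
  have hDb : IsBounded D := hFbd.subset diff_subset
  have hGb : IsBounded G := hΩbd.subset diff_subset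
  have hF : C ∪ D = F := inter_union_diff F Ω
  have hΩ : C ∪ G = Ω := by rw [hCdef, inter_comm F Ω, hGdef]; exact inter_union_diff Ω F
  have hd1 : Disjoint C D := disjoint_left.mpr fun a ha hb => hb.2 ha.2
  have hd2 : Disjoint C G := disjoint_left.mpr fun a ha hb => hb.2 ha.1
  have hd3 : Disjoint G D := disjoint_left.mpr fun a ha hb => ha.2 hb.1
  have e1 := I_add_left hN0 he0 heN hDm hd1 hCb hDb hFbd
  rw [hF] at e1
  have e2 := I_add_left hN0 he0 heN hGm hd2 hCb hGb hΩbd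
  rw [hΩ] at e2
  have e3 := I_add_right hN0 he0 heN hDm hd1 hCb hCb hDb
  rw [hF] at e3
  have e4 := I_add_right hN0 he0 heN hGm hd2 hCb hCb hGb
  rw [hΩ] at e4
  have e5 := I_add_right hN0 he0 heN hGm hd2 hDb hCb hGb
  rw [hΩ] at e5
  have e6 := I_add_right hN0 he0 heN hDm hd1 hGb hCb hDb
  rw [hF] at e6
  have e7 := I_symm hN0 he0 heN hDb hGb
  have e8 := I_symm hN0 he0 heN hCb hDb
  have e9 := I_symm hN0 he0 heN hCb hGb
  have r1 : (∫ x in D, ((∫ y in F, ‖x - y‖ ^ (α - N)) + ∫ y in Ω, ‖x - y‖ ^ (α - N))) =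
      (∫ x in D, ∫ y in F, ‖x - y‖ ^ (α - N)) + ∫ x in D, ∫ y in Ω, ‖x - y‖ ^ (α - N) :=
    integral_add (pot_integrableOn hN0 he0 heN hDb hFbd) (pot_integrableOn hN0 he0 heN hDb hΩbd)
  have r2 : (∫ x in G, ((∫ y in F, ‖x - y‖ ^ (α - N)) + ∫ y in Ω, ‖x - y‖ ^ (α - N))) =
      (∫ x in G, ∫ y in F, ‖x - y‖ ^ (α - N)) + ∫ x in G, ∫ y in Ω, ‖x - y‖ ^ (α - N) :=
    integral_add (pot_integrableOn hN0 he0 heN hGb hFbd) (pot_integrableOn hN0 he0 heN hGb hΩbd)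
  have hsd : symmDiff Ω F = G ∪ D := by rw [Set.symmDiff_def]
  have rsd : (∫ x in symmDiff Ω F, ((∫ y in F, ‖x - y‖ ^ (α - N)) + ∫ y in Ω, ‖x - y‖ ^ (α - N))) =
      (∫ x in G, ((∫ y in F, ‖x - y‖ ^ (α - N)) + ∫ y in Ω, ‖x - y‖ ^ (α - N))) +
      ∫ x in D, ((∫ y in F, ‖x - y‖ ^ (α - N)) + ∫ y in Ω, ‖x - y‖ ^ (α - N)) := by
    rw [hsd]
    exact setIntegral_union hd3 hDm
      ((pot_integrableOn hN0 he0 heN hGb hFbd).add (pot_integrableOn hN0 he0 heN hGb hΩbd))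
      ((pot_integrableOn hN0 he0 heN hDb hFbd).add (pot_integrableOn hN0 he0 heN hDb hΩbd))
  have nn1 : 0 ≤ ∫ x in G, ∫ y in F, ‖x - y‖ ^ (α - (N : ℝ)) := I_nonneg G F
  have nn2 : 0 ≤ ∫ x in G, ∫ y in Ω, ‖x - y‖ ^ (α - (N : ℝ)) := I_nonneg G Ω
  constructor
  · rw [r1, r2]; linarith
  · rw [rsd, r1, r2]; linarith
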